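/- Let Γ be a group generated by g elements which decomposes as a direct product Γ = Γ₁ × ⋯ × Γ_m of nontrivial groups. If Γ is n-QM for some n ≥ 2, then m ≤ log₂(k_n(F_g)), where k_n(F_g) is the index in the free group F_g of the intersection of all its normal subgroups of index at most n. -/

import Mathlib

set_option maxHeartbeats 800000


/-- A group `Γ` is `n`-QM if every nontrivial finitely generated subgroup has a
proper normal subgroup of index at most `n`. -/
def IsQM (n : ℕ) (Γ : Type*) [Group Γ] : Prop :=
  ∀ Δ : Subgroup Γ, Δ.FG → Δ ≠ ⊥ →
    ∃ N : Subgroup Δ, N.Normal ∧ 1 < N.index ∧ N.index ≤ n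

/-- `Kn n G` is the intersection of all normal subgroups of `G` of (finite) index
at most `n`. -/
def Kn (n : ℕ) (G : Type*) [Group G] : Subgroup G :=
  ⨅ N ∈ {N : Subgroup G | N.Normal ∧ N.index ≠ 0 ∧ N.index ≤ n}, N

/-- `kn n G` is the index of `Kn n G` in `G`. -/
noncomputable def kn (n : ℕ) (G : Type*) [Group G] : ℕ := (Kn n G).index

lemma mem_Kn_iff {n : ℕ} {G : Type*} [Group G] {x : G} :
    x ∈ Kn n G ↔ ∀ N : Subgroup G, N.Normal → N.index ≠ 0 → N.index ≤ n → x ∈ N := by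
  simp only [Kn, Subgroup.mem_iInf, Set.mem_setOf_eq, and_imp]

/-- `Kn` is monotone under surjections: the preimage of `Kn n Q` contains `Kn n G`. -/
lemma Kn_le_comap {G Q : Type*} [Group G] [Group Q] (n : ℕ) (π : G →* Q)
    (hπ : Function.Surjective π) : Kn n G ≤ (Kn n Q).comap π := by
  intro x hx
  rw [Subgroup.mem_comap, mem_Kn_iff]
  intro N hnorm hne hle
  have h1 : (N.comap π).index = N.index := Subgroup.index_comap_of_surjective N hπ
  have := (mem_Kn_iff.mp hx) (N.comap π) (hnorm.comap π) (by rw [h1]; exact hne)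
    (by rw [h1]; exact hle)
  exact this

lemma kn_dvd_of_surjective {G Q : Type*} [Group G] [Group Q] (n : ℕ) (π : G →* Q)
    (hπ : Function.Surjective π) : kn n Q ∣ kn n G := by
  have h := Subgroup.index_dvd_of_le (Kn_le_comap n π hπ)
  rwa [Subgroup.index_comap_of_surjective _ hπ] at h

/-- The free group on finitely many generators has finite `kn`. -/
lemma kn_freeGroup_ne_zero (g n : ℕ) : kn n (FreeGroup (Fin g)) ≠ 0 := by
  set F := FreeGroup (Fin g)
  have hfin : Finite (F →* Equiv.Perm (Fin n)) :=
    Finite.of_equiv _ (FreeGroup.lift : (Fin g → Equiv.Perm (Fin n)) ≃ _)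
  set K0 : Subgroup F := ⨅ φ : F →* Equiv.Perm (Fin n), φ.ker with hK0
  have hle : K0 ≤ Kn n F := by
    intro x hx
    rw [mem_Kn_iff]
    intro N hnorm hne hle
    haveI := hnorm
    have hfinQ : Finite (F ⧸ N) := by
      have : Nat.card (F ⧸ N) ≠ 0 := hne
      exact Nat.finite_of_card_ne_zero this
    haveI := hfinQ
    haveI : Fintype (F ⧸ N) := Fintype.ofFinite _
    have hcard : Fintype.card (F ⧸ N) ≤ n := by
      rw [← Nat.card_eq_fintype_card]
      exact hle
    let e : (F ⧸ N) ↪ Fin n :=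
      (Fintype.equivFin (F ⧸ N)).toEmbedding.trans (Fin.castLEEmb hcard)
    let c : (F ⧸ N) →* Equiv.Perm (F ⧸ N) := MulAction.toPermHom (F ⧸ N) (F ⧸ N)
    let φ : F →* Equiv.Perm (Fin n) :=
      ((Equiv.Perm.viaEmbeddingHom e).comp c).comp (QuotientGroup.mk' N)
    have hx' : x ∈ φ.ker := by
      have := Subgroup.mem_iInf.mp hx
      exact this φ
    have h1 : c ((QuotientGroup.mk' N) x) = 1 := by
      apply Equiv.Perm.viaEmbeddingHom_injective e
      simpa [φ, MonoidHom.mem_ker] using hx'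
    have h2 : (QuotientGroup.mk' N) x = 1 := by
      apply MulAction.toPerm_injective (α := F ⧸ N) (β := F ⧸ N)
      rw [show MulAction.toPerm (1 : F ⧸ N) = 1 from map_one c]
      simpa [c, MulAction.toPermHom] using h1
    exact (QuotientGroup.eq_one_iff x).mp (by simpa using h2)
  have hK0fin : K0.FiniteIndex := by
    refine Subgroup.finiteIndex_iInf fun φ => ?_
    constructor
    rw [Subgroup.index_ker]
    have hfr : Finite φ.range := Subtype.finite
    exact Nat.card_ne_zero.mpr ⟨⟨1, 1, map_one φ⟩, hfr⟩
  intro h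
  have hdvd := Subgroup.index_dvd_of_le hle
  rw [show (Kn n F).index = kn n F from rfl, h] at hdvd
  exact hK0fin.index_ne_zero (Nat.eq_zero_of_zero_dvd hdvd)

/-- Dependent version of `Subgroup.index_pi`. -/
lemma index_pi_dep {ι : Type*} [Fintype ι] {f : ι → Type*} [∀ i, Group (f i)]
    (H : ∀ i, Subgroup (f i)) :
    (Subgroup.pi Set.univ H).index = ∏ i, (H i).index := by
  simp_rw [Subgroup.index, ← Nat.card_pi]
  refine Nat.card_congr
    ((Quotient.congrRight (fun x y ↦ ?_)).trans (Setoid.piQuotientEquiv _).symm)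
  rw [QuotientGroup.leftRel_pi]

theorem bound_on_direct_factors (g n m : ℕ) (hn : 2 ≤ n)
    (Γ : Fin m → Type*) [∀ i, Group (Γ i)] (hnt : ∀ i, Nontrivial (Γ i))
    (f : Fin g → ∀ i, Γ i) (hgen : Subgroup.closure (Set.range f) = ⊤)
    (hQM : IsQM n (∀ i, Γ i)) :
    (m : ℝ) ≤ Real.logb 2 (kn n (FreeGroup (Fin g))) := by
  classical
  -- surjection from the free group
  let π : FreeGroup (Fin g) →* (∀ i, Γ i) := FreeGroup.lift f
  have hπ : Function.Surjective π := by
    have hr : π.range = ⊤ := by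
      rw [show π.range = Subgroup.closure (Set.range f) from FreeGroup.range_lift_eq_closure]
      exact hgen
    exact MonoidHom.range_eq_top.mp hr
  -- G is finitely generated
  haveI hGfg : Group.FG (∀ i, Γ i) :=
    Group.fg_iff.mpr ⟨Set.range f, hgen, Set.finite_range f⟩
  -- for each i, produce a normal subgroup of Γ i of index in [2, n]
  have key : ∀ i : Fin m, ∃ N : Subgroup (Γ i), N.Normal ∧ 1 < N.index ∧ N.index ≤ n := by
    intro i
    haveI : Group.FG (Γ i) :=
      Group.fg_of_surjective (f := Pi.evalMonoidHom Γ i) (Function.surjective_eval i)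
    let ι : Γ i →* (∀ j, Γ j) := MonoidHom.mulSingle Γ i
    let H : Subgroup (∀ j, Γ j) := ι.range
    haveI : Group.FG H := Group.fg_range ι
    have hHfg : H.FG := (Group.fg_iff_subgroup_fg H).mp this
    have hHne : H ≠ ⊥ := by
      obtain ⟨x, hx⟩ := exists_ne (1 : Γ i)
      intro hbot
      have hmem : ι x ∈ H := ⟨x, rfl⟩
      rw [hbot, Subgroup.mem_bot] at hmem
      apply hx
      have := congrFun hmem i
      simpa [ι, MonoidHom.mulSingle_apply, Pi.mulSingle_eq_same] using this
    obtain ⟨N', hN'norm, hN'lt, hN'le⟩ := hQM H hHfg hHne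
    let e : Γ i →* H := ι.rangeRestrict
    have he : Function.Surjective e := ι.rangeRestrict_surjective
    refine ⟨N'.comap e, hN'norm.comap e, ?_, ?_⟩
    · rwa [Subgroup.index_comap_of_surjective _ he]
    · rwa [Subgroup.index_comap_of_surjective _ he]
  choose N hnorm hlt hle using key
  -- the pi subgroup
  let M : Subgroup (∀ i, Γ i) := Subgroup.pi Set.univ N
  have hKnM : Kn n (∀ i, Γ i) ≤ M := by
    intro x hx
    rw [Subgroup.mem_pi]
    intro i _
    have hev : Function.Surjective (Pi.evalMonoidHom Γ i) := Function.surjective_eval i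
    have hidx : ((N i).comap (Pi.evalMonoidHom Γ i)).index = (N i).index :=
      Subgroup.index_comap_of_surjective _ hev
    have := (mem_Kn_iff.mp hx) ((N i).comap (Pi.evalMonoidHom Γ i))
      ((hnorm i).comap _) (by rw [hidx]; exact Nat.ne_zero_of_lt (hlt i)) (by rw [hidx]; exact hle i)
    exact this
  have hMidx : M.index = ∏ i, (N i).index := by
    simpa [M] using index_pi_dep N
  have hMge : 2 ^ m ≤ M.index := by
    rw [hMidx]
    calc (2:ℕ) ^ m = ∏ _i : Fin m, 2 := by simp
    _ ≤ ∏ i, (N i).index := Finset.prod_le_prod' fun i _ => hlt i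
  -- kn chain
  have hknF : kn n (FreeGroup (Fin g)) ≠ 0 := kn_freeGroup_ne_zero g n
  have hdvd1 : kn n (∀ i, Γ i) ∣ kn n (FreeGroup (Fin g)) := kn_dvd_of_surjective n π hπ
  have hknG : kn n (∀ i, Γ i) ≠ 0 := fun h => hknF (by simpa [h] using hdvd1)
  have hdvd2 : M.index ∣ kn n (∀ i, Γ i) := Subgroup.index_dvd_of_le hKnM
  have hchain : 2 ^ m ≤ kn n (FreeGroup (Fin g)) :=
    le_trans hMge (le_trans (Nat.le_of_dvd (Nat.pos_of_ne_zero hknG) hdvd2)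
      (Nat.le_of_dvd (Nat.pos_of_ne_zero hknF) hdvd1))
  -- conclude with logb
  have h2 : (2:ℝ) ^ m ≤ (kn n (FreeGroup (Fin g)) : ℝ) := by exact_mod_cast hchain
  have hpos : (0:ℝ) < (kn n (FreeGroup (Fin g)) : ℝ) := lt_of_lt_of_le (by positivity) h2
  rw [Real.le_logb_iff_rpow_le (by norm_num) hpos]
  rw [Real.rpow_natCast]
  exact h2
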